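/- For finite stochastic games, the λ-discounted values converge as λ → 0⁺: if for each z ∈ ℝ the function λ ↦ val W^k_λ(z) coincides near 0 with a rational function of λ (so F^k(z) := lim_{λ→0} val W^k_λ(z)/λⁿ exists in the extended reals), and w is the unique sign-change point of F^k, then lim_{λ→0} v^k_λ = w. -/

import Mathlib

/-- The minimax value of a matrix game over mixed strategies (simplices). -/
noncomputable def matVal {α β : Type*} [Fintype α] [Fintype β]
    (M : Matrix α β ℝ) : ℝ :=
  ⨆ s : stdSimplex ℝ α, ⨅ t : stdSimplex ℝ β, ∑ a, ∑ b, s.1 a * M a b * t.1 b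

/-- Transition matrix induced by a pure stationary strategy pair. -/
def Qpure {n : ℕ} {I J : Type} (q : Fin n → I → J → Fin n → ℝ)
    (bi : Fin n → I) (bj : Fin n → J) : Matrix (Fin n) (Fin n) ℝ :=
  Matrix.of fun ℓ ℓ' => q ℓ (bi ℓ) (bj ℓ) ℓ'

/-- `d^0_λ(𝐢,𝐣) = det (Id - (1-λ) Q(𝐢,𝐣))`. -/
noncomputable def d0 {n : ℕ} {I J : Type} (q : Fin n → I → J → Fin n → ℝ)
    (lam : ℝ) (bi : Fin n → I) (bj : Fin n → J) : ℝ :=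
  ((1 : Matrix (Fin n) (Fin n) ℝ) - (1 - lam) • Qpure q bi bj).det

/-- `d^k_λ(𝐢,𝐣)`: the same determinant with the `k`-th column replaced by `λ g(𝐢,𝐣)`. -/
noncomputable def dk {n : ℕ} {I J : Type} (g : Fin n → I → J → ℝ)
    (q : Fin n → I → J → Fin n → ℝ) (k : Fin n) (lam : ℝ)
    (bi : Fin n → I) (bj : Fin n → J) : ℝ :=
  (((1 : Matrix (Fin n) (Fin n) ℝ) - (1 - lam) • Qpure q bi bj).updateCol k
    (lam • fun ℓ => g ℓ (bi ℓ) (bj ℓ))).det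

/-- The parameterized matrix `W^k_λ(z)` with entries `d^k_λ(𝐢,𝐣) - z d^0_λ(𝐢,𝐣)` over
pure stationary strategy pairs. -/
noncomputable def Wmat {n : ℕ} {I J : Type} (g : Fin n → I → J → ℝ)
    (q : Fin n → I → J → Fin n → ℝ) (k : Fin n) (lam z : ℝ) :
    Matrix (Fin n → I) (Fin n → J) ℝ :=
  Matrix.of fun bi bj => dk g q k lam bi bj - z * d0 q lam bi bj

section Helpers

open Finset

variable {α β : Type*} [Fintype α] [Fintype β] [Nonempty α] [Nonempty β]

/-- The expected payoff of the matrix game under mixed strategies. -/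
noncomputable def payAux (M : Matrix α β ℝ) (s : stdSimplex ℝ α) (t : stdSimplex ℝ β) : ℝ :=
  ∑ a, ∑ b, s.1 a * M a b * t.1 b

lemma payAux_abs_le (M : Matrix α β ℝ) (s : stdSimplex ℝ α) (t : stdSimplex ℝ β) :
    |payAux M s t| ≤ ∑ a, ∑ b, |M a b| := by
  refine (Finset.abs_sum_le_sum_abs _ _).trans (Finset.sum_le_sum fun a _ => ?_)
  refine (Finset.abs_sum_le_sum_abs _ _).trans (Finset.sum_le_sum fun b _ => ?_)
  have hs := mem_Icc_of_mem_stdSimplex s.2 a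
  have ht := mem_Icc_of_mem_stdSimplex t.2 b
  rw [abs_mul, abs_mul, abs_of_nonneg hs.1, abs_of_nonneg ht.1]
  calc s.1 a * |M a b| * t.1 b ≤ 1 * |M a b| * 1 := by
        apply mul_le_mul (mul_le_mul hs.2 le_rfl (abs_nonneg _) zero_le_one) ht.2 ht.1
        positivity
    _ = |M a b| := by ring

lemma payAux_mono {M N : Matrix α β ℝ} (h : ∀ a b, M a b ≤ N a b)
    (s : stdSimplex ℝ α) (t : stdSimplex ℝ β) : payAux M s t ≤ payAux N s t := by
  refine Finset.sum_le_sum fun a _ => Finset.sum_le_sum fun b _ => ?_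
  have hs := (mem_Icc_of_mem_stdSimplex s.2 a).1
  have ht := (mem_Icc_of_mem_stdSimplex t.2 b).1
  exact mul_le_mul_of_nonneg_right (mul_le_mul_of_nonneg_left (h a b) hs) ht

instance stdSimplex.nonempty' : Nonempty (stdSimplex ℝ α) := by
  classical exact ⟨⟨_, single_mem_stdSimplex ℝ (Classical.arbitrary α)⟩⟩

lemma payAux_bddBelow (M : Matrix α β ℝ) (s : stdSimplex ℝ α) :
    BddBelow (Set.range fun t => payAux M s t) := by
  refine ⟨-(∑ a, ∑ b, |M a b|), ?_⟩
  rintro x ⟨t, rfl⟩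
  exact neg_le_of_abs_le (payAux_abs_le M s t)

lemma matVal_mono {M N : Matrix α β ℝ} (h : ∀ a b, M a b ≤ N a b) :
    matVal M ≤ matVal N := by
  have hMN : ∀ (P : Matrix α β ℝ), matVal P = ⨆ s, ⨅ t, payAux P s t := fun _ => rfl
  rw [hMN, hMN]
  refine ciSup_mono ?_ fun s => ?_
  · refine ⟨∑ a, ∑ b, |N a b|, ?_⟩
    rintro x ⟨s, rfl⟩
    exact ciInf_le_of_le (payAux_bddBelow N s) (Classical.arbitrary _)
      (le_of_abs_le (payAux_abs_le N s _))
  · exact ciInf_mono (payAux_bddBelow M s) (payAux_mono h s)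

lemma d0_pos {n : ℕ} {I J : Type} (q : Fin n → I → J → Fin n → ℝ)
    (hq0 : ∀ ℓ i j ℓ', 0 ≤ q ℓ i j ℓ') (hq1 : ∀ ℓ i j, ∑ ℓ', q ℓ i j ℓ' = 1)
    {lam : ℝ} (h0 : 0 < lam) (h1 : lam ≤ 1) (bi : Fin n → I) (bj : Fin n → J) :
    0 < d0 q lam bi bj := by
  set Q := Qpure q bi bj with hQ
  have hQ0 : ∀ ℓ ℓ', 0 ≤ Q ℓ ℓ' := fun ℓ ℓ' => hq0 _ _ _ _
  have hQ1 : ∀ ℓ, ∑ ℓ', Q ℓ ℓ' = 1 := fun ℓ => hq1 _ _ _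
  set f : ℝ → ℝ := fun u => ((1 : Matrix (Fin n) (Fin n) ℝ) - u • Q).det with hf
  have hcont : Continuous f := by
    apply Continuous.matrix_det
    exact continuous_const.sub (continuous_id.smul continuous_const)
  have hne : ∀ u : ℝ, 0 ≤ u → u < 1 → f u ≠ 0 := by
    intro u hu0 hu1
    apply det_ne_zero_of_sum_row_lt_diag
    intro ℓ
    have hdiag : ((1 : Matrix (Fin n) (Fin n) ℝ) - u • Q) ℓ ℓ = 1 - u * Q ℓ ℓ := by
      simp [Matrix.sub_apply, Matrix.smul_apply, Matrix.one_apply, smul_eq_mul]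
    have hoff : ∀ ℓ' ≠ ℓ, ((1 : Matrix (Fin n) (Fin n) ℝ) - u • Q) ℓ ℓ' = -(u * Q ℓ ℓ') := by
      intro ℓ' hℓ'
      simp [Matrix.sub_apply, Matrix.smul_apply, Matrix.one_apply, Ne.symm hℓ', smul_eq_mul]
    have hQll : Q ℓ ℓ ≤ 1 := by
      rw [← hQ1 ℓ]
      exact Finset.single_le_sum (fun i _ => hQ0 ℓ i) (Finset.mem_univ ℓ)
    have hsum : ∑ ℓ' ∈ Finset.univ.erase ℓ, ‖((1 : Matrix (Fin n) (Fin n) ℝ) - u • Q) ℓ ℓ'‖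
        = u * (1 - Q ℓ ℓ) := by
      rw [show u * (1 - Q ℓ ℓ) = ∑ ℓ' ∈ Finset.univ.erase ℓ, u * Q ℓ ℓ' by
        rw [← Finset.mul_sum, Finset.sum_erase_eq_sub (Finset.mem_univ ℓ), hQ1 ℓ]]
      refine Finset.sum_congr rfl fun ℓ' hℓ' => ?_
      rw [hoff ℓ' (Finset.mem_erase.1 hℓ').1, norm_neg, Real.norm_eq_abs,
        abs_of_nonneg (mul_nonneg hu0 (hQ0 _ _))]
    rw [hsum, hdiag, Real.norm_eq_abs, abs_of_pos]
    · nlinarith [hQ0 ℓ ℓ]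
    · nlinarith [hQ0 ℓ ℓ]
  have key : ∀ u : ℝ, 0 ≤ u → u < 1 → 0 < f u := by
    intro u hu0 hu1
    rcases lt_trichotomy (f u) 0 with hneg | hzero | hpos
    · exfalso
      have hf0 : f 0 = 1 := by simp [hf]
      have : (0 : ℝ) ∈ Set.Icc (f u) (f 0) := ⟨hneg.le, by rw [hf0]; norm_num⟩
      obtain ⟨s, hs, hfs⟩ := intermediate_value_Icc' hu0 hcont.continuousOn this
      exact hne s hs.1 (lt_of_le_of_lt hs.2 hu1) hfs
    · exact absurd hzero (hne u hu0 hu1)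
    · exact hpos
  have : d0 q lam bi bj = f (1 - lam) := rfl
  rw [this]
  exact key _ (by linarith) (by linarith)

end Helpers

/-- **Theorem 2 (convergence of the discounted values).** If `vk λ` is the
`λ`-discounted value (the unique zero of `z ↦ val W^k_λ(z)`), if for each `z` the limit
`F^k(z) = lim_{λ→0⁺} val W^k_λ(z)/λⁿ` exists in the extended reals, and if `w` is the
unique sign-change point of `F^k`, then `v^k_λ → w` as `λ → 0⁺`. -/
theorem stmt19 (n : ℕ) (I J : Type) [Fintype I] [Fintype J] [Nonempty I] [Nonempty J]
    (g : Fin n → I → J → ℝ) (q : Fin n → I → J → Fin n → ℝ)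
    (hq0 : ∀ ℓ i j ℓ', 0 ≤ q ℓ i j ℓ') (hq1 : ∀ ℓ i j, ∑ ℓ', q ℓ i j ℓ' = 1)
    (k : Fin n) (vk : ℝ → ℝ) (F : ℝ → EReal) (w : ℝ)
    (hvk : ∀ lam ∈ Set.Ioc (0 : ℝ) 1, matVal (Wmat g q k lam (vk lam)) = 0)
    (hF : ∀ z : ℝ, Filter.Tendsto
      (fun lam : ℝ => ((matVal (Wmat g q k lam z) / lam ^ n : ℝ) : EReal))
      (nhdsWithin 0 (Set.Ioi 0)) (nhds (F z)))
    (hw1 : ∀ z : ℝ, w < z → F z < 0) (hw2 : ∀ z : ℝ, z < w → 0 < F z) :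
    Filter.Tendsto vk (nhdsWithin 0 (Set.Ioi 0)) (nhds w) := by
  rw [Metric.tendsto_nhds]
  intro ε hε
  -- eventually λ is in (0, 1]
  have hmem : ∀ᶠ lam in nhdsWithin (0:ℝ) (Set.Ioi 0), lam ∈ Set.Ioi (0:ℝ) :=
    eventually_mem_nhdsWithin
  have hlt1 : ∀ᶠ lam in nhdsWithin (0:ℝ) (Set.Ioi 0), lam < 1 :=
    Filter.Eventually.filter_mono nhdsWithin_le_nhds (eventually_lt_nhds zero_lt_one)
  -- eventually val W_λ(w+ε) < 0
  have hup : ∀ᶠ lam in nhdsWithin (0:ℝ) (Set.Ioi 0),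
      ((matVal (Wmat g q k lam (w + ε)) / lam ^ n : ℝ) : EReal) < ((0:ℝ) : EReal) := by
    have := hw1 (w + ε) (by linarith)
    exact (hF (w + ε)).eventually_lt_const (by simpa using this)
  -- eventually val W_λ(w-ε) > 0
  have hlo : ∀ᶠ lam in nhdsWithin (0:ℝ) (Set.Ioi 0),
      ((0:ℝ) : EReal) < ((matVal (Wmat g q k lam (w - ε)) / lam ^ n : ℝ) : EReal) := by
    have := hw2 (w - ε) (by linarith)
    exact (hF (w - ε)).eventually_const_lt (by simpa using this)
  filter_upwards [hmem, hlt1, hup, hlo] with lam hpos hlt1 hup hlo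
  have hpos' : (0:ℝ) < lam := hpos
  have hm : lam ∈ Set.Ioc (0:ℝ) 1 := ⟨hpos', hlt1.le⟩
  have hv0 := hvk lam hm
  have hln : (0:ℝ) < lam ^ n := pow_pos hpos' n
  have hupR : matVal (Wmat g q k lam (w + ε)) < 0 := by
    have h' : matVal (Wmat g q k lam (w + ε)) / lam ^ n < 0 := EReal.coe_lt_coe_iff.1 hup
    by_contra hc
    exact absurd (div_nonneg (not_lt.1 hc) hln.le) (not_le.2 h')
  have hloR : 0 < matVal (Wmat g q k lam (w - ε)) := by
    have h' : 0 < matVal (Wmat g q k lam (w - ε)) / lam ^ n := EReal.coe_lt_coe_iff.1 hlo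
    by_contra hc
    exact absurd h' (not_lt.2 (div_nonpos_of_nonpos_of_nonneg (not_lt.1 hc) hln.le))
  -- monotonicity of z ↦ matVal (Wmat g q k lam z)
  have hmono : ∀ z1 z2 : ℝ, z1 ≤ z2 →
      matVal (Wmat g q k lam z2) ≤ matVal (Wmat g q k lam z1) := by
    intro z1 z2 h12
    refine matVal_mono fun bi bj => ?_
    have hd0 := d0_pos q hq0 hq1 hpos' hlt1.le bi bj
    simp only [Wmat, Matrix.of_apply]
    nlinarith
  have h1 : vk lam < w + ε := by
    by_contra hc
    have := hmono (w + ε) (vk lam) (not_lt.1 hc)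
    rw [hv0] at this
    exact absurd (this.trans_lt hupR) (lt_irrefl 0)
  have h2 : w - ε < vk lam := by
    by_contra hc
    have := hmono (vk lam) (w - ε) (not_lt.1 hc)
    rw [hv0] at this
    exact absurd (hloR.trans_le this) (lt_irrefl 0)
  rw [Real.dist_eq, abs_lt]
  constructor <;> linarith
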